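/- On ℙ¹ × ℙ¹, the total Ext algebra of O(0,-1) with the Koszul-type self-extensions determined by the normal bundle N = O(-1,-1)^{⊕2} satisfies: ⊕_{p,q} H^p(ℙ¹×ℙ¹, Λ^q N^∨) is 1-dimensional in total degrees 0 and 4 and zero in all other total degrees, i.e., it is isomorphic as a graded vector space to H^*(S⁴; ℂ). -/
import Mathlib


/-- On `ℙ¹ × ℙ¹`, the total Ext algebra of `O(0,-1)` with the Koszul-type
self-extensions determined by the normal bundle `N = O(-1,-1)^⊕2` is
isomorphic as a graded vector space to `H^*(S⁴; ℂ)`: one-dimensional in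
total degrees `0` and `4` and zero in all other total degrees.
Here `h i b = dim H^i(ℙ¹, O(b))` and `h2 i a b = dim H^i(ℙ¹×ℙ¹, O(a,b))`,
with the standard cohomology of `ℙ¹` and Künneth as hypotheses, and
`ext k = dim ⊕_{p+q=k} H^p(ℙ¹×ℙ¹, Λ^q N)`, where
`Λ⁰N = O`, `Λ¹N = O(-1,-1)^⊕2`, `Λ²N = O(-2,-2)`. -/
theorem ext_algebra_is_H_of_S4 (h : ℕ → ℤ → ℕ) (h2 : ℕ → ℤ → ℤ → ℕ)
    (h0 : ∀ b : ℤ, 0 ≤ b → h 0 b = (b + 1).toNat)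
    (h0' : ∀ b : ℤ, b < 0 → h 0 b = 0)
    (hserre : ∀ b : ℤ, h 1 b = h 0 (-b - 2))
    (htop : ∀ i, 2 ≤ i → ∀ b : ℤ, h i b = 0)
    (kunneth : ∀ i (a b : ℤ),
      h2 i a b = ∑ p ∈ Finset.range (i + 1), h p a * h (i - p) b)
    (ext : ℕ → ℕ)
    (hext : ∀ k, ext k =
      h2 k 0 0 + 2 * (if 1 ≤ k then h2 (k - 1) (-1) (-1) else 0)
        + if 2 ≤ k then h2 (k - 2) (-2) (-2) else 0) :
    ext 0 = 1 ∧ ext 4 = 1 ∧ ∀ k, k ≠ 0 → k ≠ 4 → ext k = 0 := by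

  have h00 : h 0 0 = 1 := by rw [h0 0 le_rfl]; rfl
  have h0m1 : h 0 (-1) = 0 := h0' _ (by norm_num)
  have h0m2 : h 0 (-2) = 0 := h0' _ (by norm_num)
  have h10 : h 1 0 = 0 := by rw [hserre]; norm_num [h0m2]
  have h1m1 : h 1 (-1) = 0 := by rw [hserre]; norm_num [h0m1]
  have h1m2 : h 1 (-2) = 1 := by rw [hserre]; norm_num [h00]
  have h2big : ∀ i, 3 ≤ i → ∀ a b : ℤ, h2 i a b = 0 := by
    intro i hi a b
    rw [kunneth]
    apply Finset.sum_eq_zero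
    intro p _
    by_cases hp : 2 ≤ p
    · rw [htop p hp, zero_mul]
    · rw [htop (i - p) (by omega), mul_zero]
  have e200 : h2 2 0 0 = 0 := by
    rw [kunneth]
    simp [Finset.sum_range_succ, h00, h10, htop 2 le_rfl]
  have e100 : h2 1 0 0 = 0 := by
    rw [kunneth]; simp [Finset.sum_range_succ, h00, h10]
  have e000 : h2 0 0 0 = 1 := by
    rw [kunneth]; simp [h00]
  have em1 : ∀ i, h2 i (-1) (-1) = 0 := by
    intro i
    by_cases hi : 3 ≤ i
    · exact h2big i hi _ _
    · rw [kunneth]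
      apply Finset.sum_eq_zero
      intro p _
      by_cases hp : 2 ≤ p
      · rw [htop p hp, zero_mul]
      · interval_cases p <;> simp [h0m1, h1m1]
  have e0m2 : h2 0 (-2) (-2) = 0 := by
    rw [kunneth]; simp [h0m2]
  have e1m2 : h2 1 (-2) (-2) = 0 := by
    rw [kunneth]; simp [Finset.sum_range_succ, h0m2, h1m2]
  have e2m2 : h2 2 (-2) (-2) = 1 := by
    rw [kunneth]
    simp [Finset.sum_range_succ, h0m2, h1m2, htop 2 le_rfl]
  refine ⟨?_, ?_, ?_⟩
  · rw [hext]; simp [e000]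
  · rw [hext]
    norm_num [h2big 4 (by norm_num), em1, e2m2]
  · intro k hk0 hk4
    match k, hk0, hk4 with
    | 1, _, _ => rw [hext]; norm_num [e100, em1]
    | 2, _, _ => rw [hext]; norm_num [e200, em1, e0m2]
    | 3, _, _ => rw [hext]; norm_num [h2big 3 le_rfl, em1, e1m2]
    | (n+5), _, _ =>
      rw [hext]
      rw [show n+5-1 = n+4 from rfl, show n+5-2 = n+3 from rfl]
      norm_num [h2big (n+5) (by omega), h2big (n+4) (by omega), h2big (n+3) (by omega), em1]
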